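/- Every boolean matrix M ∈ {0,1}^{N×N} satisfies signrank(M) ≤ 1 + suprank(M)². -/

import Mathlib

open Matrix

/-- The support-rank of a boolean matrix: the minimum rank of a real matrix with
the same support. -/
noncomputable def suprank {I J : Type*} [Fintype J] (M : Matrix I J Bool) : ℕ :=
  sInf {r : ℕ | ∃ A : Matrix I J ℝ, A.rank = r ∧
    ∀ i j, A i j = 0 ↔ M i j = false}

/-- The sign-rank of a boolean matrix: the minimum rank of a real matrix that is
positive on the 1-entries and negative on the 0-entries. -/
noncomputable def signrank {I J : Type*} [Fintype J] (M : Matrix I J Bool) : ℕ :=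
  sInf {r : ℕ | ∃ A : Matrix I J ℝ, A.rank = r ∧
    ∀ i j, (M i j = true → 0 < A i j) ∧ (M i j = false → A i j < 0)}

lemma rank_le_of_cols_in_span {N : ℕ} {ι : Type*} [Fintype ι]
    (B : Matrix (Fin N) (Fin N) ℝ) (f : ι → (Fin N → ℝ))
    (h : ∀ j, Bᵀ j ∈ Submodule.span ℝ (Set.range f)) :
    B.rank ≤ Fintype.card ι := by
  rw [rank_eq_finrank_span_cols]
  refine le_trans (Submodule.finrank_mono ?_) (finrank_range_le_card f)
  rw [Submodule.span_le]
  rintro x ⟨j, rfl⟩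
  exact h j

theorem stmt4 (N : ℕ) (M : Matrix (Fin N) (Fin N) Bool) :
    signrank M ≤ 1 + suprank M ^ 2 := by
  classical
  -- the defining set of suprank is nonempty
  have hne : {r : ℕ | ∃ A : Matrix (Fin N) (Fin N) ℝ, A.rank = r ∧
      ∀ i j, A i j = 0 ↔ M i j = false}.Nonempty := by
    refine ⟨(Matrix.of fun i j => if M i j then (1:ℝ) else 0).rank,
      Matrix.of fun i j => if M i j then (1:ℝ) else 0, rfl, ?_⟩
    intro i j
    cases h : M i j <;> simp [h]
  obtain ⟨A, hAr, hAs⟩ := Nat.sInf_mem hne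
  -- choose ε
  obtain ⟨ε, hε, hεlt⟩ : ∃ ε : ℝ, 0 < ε ∧ ∀ i j, A i j ≠ 0 → ε < (A i j)^2 := by
    set s : Finset (Fin N × Fin N) :=
      Finset.univ.filter (fun p => A p.1 p.2 ≠ 0) with hs_def
    by_cases hs : s.Nonempty
    · have hpos : 0 < s.inf' hs (fun p => (A p.1 p.2)^2) := by
        rw [Finset.lt_inf'_iff]
        intro p hp
        have : A p.1 p.2 ≠ 0 := by simpa [hs_def] using hp
        positivity
      refine ⟨s.inf' hs (fun p => (A p.1 p.2)^2) / 2, by positivity, ?_⟩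
      intro i j hij
      have hmem : (i, j) ∈ s := by simp [hs_def, hij]
      have := Finset.inf'_le (fun p => (A p.1 p.2)^2) hmem
      linarith
    · refine ⟨1, one_pos, ?_⟩
      intro i j hij
      exact absurd ⟨(i, j), by simp [hs_def, hij]⟩ hs
  -- the sign matrix
  set B : Matrix (Fin N) (Fin N) ℝ := Matrix.of fun i j => (A i j)^2 - ε with hB
  have hsign : signrank M ≤ B.rank := by
    apply Nat.sInf_le
    refine ⟨B, rfl, ?_⟩
    intro i j
    constructor
    · intro h
      have hne0 : A i j ≠ 0 := by
        intro h0
        simpa [h] using (hAs i j).mp h0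
      have := hεlt i j hne0
      simp only [hB, Matrix.of_apply]
      linarith
    · intro h
      have h0 : A i j = 0 := (hAs i j).mpr h
      simp only [hB, Matrix.of_apply, h0]
      simpa using hε
  -- bound rank of B
  set V := Submodule.span ℝ (Set.range Aᵀ) with hV
  have hfV : Module.finrank ℝ V = A.rank := (rank_eq_finrank_span_cols A).symm
  set r := Module.finrank ℝ V with hr
  let b : Module.Basis (Fin r) ℝ V := Module.finBasis ℝ V
  let f : Option (Fin r × Fin r) → (Fin N → ℝ) := fun o =>
    match o with
    | none => fun _ => 1
    | some p => (b p.1 : Fin N → ℝ) * (b p.2 : Fin N → ℝ)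
  have hprod : ∀ x y : V, (x : Fin N → ℝ) * (y : Fin N → ℝ) ∈
      Submodule.span ℝ (Set.range f) := by
    intro x y
    have hx : (x : Fin N → ℝ) = ∑ a, b.repr x a • ((b a : Fin N → ℝ)) := by
      conv_lhs => rw [← b.sum_repr x]
      simp [-Module.Basis.sum_repr]
    have hy : (y : Fin N → ℝ) = ∑ a, b.repr y a • ((b a : Fin N → ℝ)) := by
      conv_lhs => rw [← b.sum_repr y]
      simp [-Module.Basis.sum_repr]
    rw [hx, hy, Finset.sum_mul_sum]
    apply Submodule.sum_mem
    intro a _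
    apply Submodule.sum_mem
    intro c _
    have heq : (b.repr x a • ((b a : Fin N → ℝ))) * (b.repr y c • ((b c : Fin N → ℝ)))
        = (b.repr x a * b.repr y c) • f (some (a, c)) := by
      funext i
      simp only [Pi.mul_apply, Pi.smul_apply, smul_eq_mul, f]
      ring
    rw [heq]
    exact Submodule.smul_mem _ _ (Submodule.subset_span ⟨some (a, c), rfl⟩)
  have hcols : ∀ j, Bᵀ j ∈ Submodule.span ℝ (Set.range f) := by
    intro j
    have hAcol : Aᵀ j ∈ V := Submodule.subset_span ⟨j, rfl⟩
    have hcol : Bᵀ j = ((⟨Aᵀ j, hAcol⟩ : V) : Fin N → ℝ) * ((⟨Aᵀ j, hAcol⟩ : V) : Fin N → ℝ)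
        - ε • f none := by
      funext i
      simp only [hB, Matrix.transpose_apply, Matrix.of_apply, Pi.sub_apply, Pi.mul_apply,
        Pi.smul_apply, smul_eq_mul, f]
      ring
    rw [hcol]
    exact Submodule.sub_mem _ (hprod _ _)
      (Submodule.smul_mem _ _ (Submodule.subset_span ⟨none, rfl⟩))
  have hrank := rank_le_of_cols_in_span B f hcols
  have hcard : Fintype.card (Option (Fin r × Fin r)) = 1 + r ^ 2 := by
    simp [Fintype.card_option, Fintype.card_prod]
    ring
  rw [hcard] at hrank
  have hrs : r = suprank M := hfV.trans hAr
  rw [hrs] at hrank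
  exact hsign.trans hrank
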